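/- Let Ω = {z_1, …, z_p} ⊂ ℤ^m, let β, σ > 0, let ψ : Ω × Ω → Ω, let a_1, a_2, a_3, a_4 ∈ ℂ^{p×p}, and let x, y : Ω → ℂ be nonvanishing with x̃(z) = x(z)/|x(z)|, regarding ℂ as ℝ². For z ∈ Ω, ω ∈ ℝ^m, η ∈ ℝ², set 𝐱(z) = diag(w ↦ |x(ψ(z, z_w))|), x̃(z,η) = diag(w ↦ exp(−√(−1)·⟨η, x̃(ψ(z, z_w))⟩)), and b(z,ω) = diag(w ↦ exp(−√(−1)·⟨ω, ψ(z, z_w)⟩)). Let λ_β and λ_σ be the Gaussian probability measures with mean 0 and covariances β^{−2}·I on ℝ^m and σ^{−2}·I on ℝ², respectively, and define k(x, y) = ∫_{ℝ²} ∫_{ℝ^m} Σ_{z,z'∈Ω} a_1ᴴ·𝐱(z)·a_2ᴴ·b(z,ω)ᴴ·a_3ᴴ·x̃(z,η)ᴴ·a_4ᴴ·a_4·ỹ(z',η)·a_3·b(z',ω)·a_2·𝐲(z')·a_1 dλ_β(ω) dλ_σ(η). Then k is a ℂ^{p×p}-valued positive definite kernel: for all n ∈ ℕ, nonvanishing inputs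 x^{(1)}, …, x^{(n)} : Ω → ℂ, and c_1, …, c_n ∈ ℂ^{p×p}, the matrix Σ_{i,j=1}^n c_iᴴ · k(x^{(i)}, x^{(j)}) · c_j is positive semidefinite. (Proposition 13: the generalized matrix-valued convolutional kernel is positive definite.) -/

import Mathlib

open Matrix MeasureTheory ProbabilityTheory
open scoped BigOperators ComplexOrder

attribute [local instance] Matrix.normedAddCommGroup Matrix.normedSpace

/-- The Gaussian probability measure on `ℝ^k` with mean `0` and covariance `β⁻²·I`,
realized as the product of `k` i.i.d. one-dimensional Gaussians of variance `β⁻²`. -/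
noncomputable def gaussPi (k : ℕ) (β : ℝ) : Measure (Fin k → ℝ) :=
  Measure.pi fun _ => gaussianReal 0 ((β⁻¹ ^ 2).toNNReal)

/-- The phase `x̃(u) = x(u)/|x(u)|`. -/
noncomputable def phPt (m : ℕ) (x : (Fin m → ℤ) → ℂ) (u : Fin m → ℤ) : ℂ :=
  x u / (‖x u‖ : ℂ)

/-- `𝐱(z) = diag(w ↦ |x(ψ(z, z_w))|)`. -/
noncomputable def diagAbsM (p m : ℕ) (z : Fin p → Fin m → ℤ)
    (ψ : (Fin m → ℤ) → (Fin m → ℤ) → (Fin m → ℤ)) (x : (Fin m → ℤ) → ℂ)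
    (zpt : Fin m → ℤ) : Matrix (Fin p) (Fin p) ℂ :=
  Matrix.diagonal fun w => (‖x (ψ zpt (z w))‖ : ℂ)

/-- `x̃(z,η) = diag(w ↦ exp(−√(−1)·⟨η, x̃(ψ(z, z_w))⟩))`, identifying `ℂ` with `ℝ²`. -/
noncomputable def diagPhaseM (p m : ℕ) (z : Fin p → Fin m → ℤ)
    (ψ : (Fin m → ℤ) → (Fin m → ℤ) → (Fin m → ℤ)) (x : (Fin m → ℤ) → ℂ)
    (zpt : Fin m → ℤ) (η : Fin 2 → ℝ) : Matrix (Fin p) (Fin p) ℂ :=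
  Matrix.diagonal fun w =>
    Complex.exp (-Complex.I *
      ((η 0 * (phPt m x (ψ zpt (z w))).re + η 1 * (phPt m x (ψ zpt (z w))).im : ℝ) : ℂ))

/-- `b(z,ω) = diag(w ↦ exp(−√(−1)·⟨ω, ψ(z, z_w)⟩))`. -/
noncomputable def diagBM (p m : ℕ) (z : Fin p → Fin m → ℤ)
    (ψ : (Fin m → ℤ) → (Fin m → ℤ) → (Fin m → ℤ))
    (zpt : Fin m → ℤ) (ω : Fin m → ℝ) : Matrix (Fin p) (Fin p) ℂ :=
  Matrix.diagonal fun w =>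
    Complex.exp (-Complex.I * ((∑ i : Fin m, ω i * (ψ zpt (z w) i : ℝ) : ℝ) : ℂ))

/-- The generalized matrix-valued convolutional kernel
`k(x,y) = ∫∫ Σ_{z,z'∈Ω} a₁ᴴ·𝐱(z)·a₂ᴴ·b(z,ω)ᴴ·a₃ᴴ·x̃(z,η)ᴴ·a₄ᴴ·a₄·ỹ(z',η)·a₃·b(z',ω)·a₂·𝐲(z')·a₁
dλ_β(ω) dλ_σ(η)` (entrywise Bochner integral). -/
noncomputable def genConvKernel (p m : ℕ) (z : Fin p → Fin m → ℤ)
    (ψ : (Fin m → ℤ) → (Fin m → ℤ) → (Fin m → ℤ)) (β σ : ℝ)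
    (a1 a2 a3 a4 : Matrix (Fin p) (Fin p) ℂ) (x y : (Fin m → ℤ) → ℂ) :
    Matrix (Fin p) (Fin p) ℂ :=
  ∫ η, (∫ ω,
      ∑ u : Fin p, ∑ u' : Fin p,
        a1ᴴ * diagAbsM p m z ψ x (z u) * a2ᴴ * (diagBM p m z ψ (z u) ω)ᴴ * a3ᴴ *
          (diagPhaseM p m z ψ x (z u) η)ᴴ * a4ᴴ * a4 * diagPhaseM p m z ψ y (z u') η *
          a3 * diagBM p m z ψ (z u') ω * a2 * diagAbsM p m z ψ y (z u') * a1
    ∂(gaussPi m β)) ∂(gaussPi 2 σ)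

/-! ### Auxiliary material for the proof -/

section Aux

noncomputable instance matESN (p : ℕ) : ESeminormedAddCommMonoid (Matrix (Fin p) (Fin p) ℂ) :=
  @ENormedAddCommMonoid.toESeminormedAddCommMonoid _ _
    (@NormedAddCommGroup.toENormedAddCommMonoid _ Matrix.normedAddCommGroup)

instance matPMS (p : ℕ) : TopologicalSpace.PseudoMetrizableSpace (Matrix (Fin p) (Fin p) ℂ) :=
  inferInstanceAs (TopologicalSpace.PseudoMetrizableSpace (Fin p → Fin p → ℂ))

lemma mnorm_mul_le {p : ℕ} (A B : Matrix (Fin p) (Fin p) ℂ) : ‖A * B‖ ≤ p * ‖A‖ * ‖B‖ := by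
  rw [Matrix.norm_le_iff (by positivity)]
  intro i j
  calc ‖(A * B) i j‖ = ‖∑ k, A i k * B k j‖ := by rw [Matrix.mul_apply]
    _ ≤ ∑ k, ‖A i k * B k j‖ := norm_sum_le _ _
    _ ≤ ∑ _k : Fin p, ‖A‖ * ‖B‖ := Finset.sum_le_sum fun k _ => by
        rw [norm_mul]
        exact mul_le_mul (Matrix.norm_entry_le_entrywise_sup_norm A)
          (Matrix.norm_entry_le_entrywise_sup_norm B) (norm_nonneg _) (norm_nonneg _)
    _ = p * ‖A‖ * ‖B‖ := by simp [mul_assoc]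

lemma mnorm_mul_le' {p : ℕ} {A B : Matrix (Fin p) (Fin p) ℂ} {a b : ℝ}
    (ha : ‖A‖ ≤ a) (hb : ‖B‖ ≤ b) : ‖A * B‖ ≤ p * a * b := by
  refine (mnorm_mul_le A B).trans ?_
  have ha0 : (0:ℝ) ≤ a := le_trans (norm_nonneg _) ha
  exact mul_le_mul (mul_le_mul_of_nonneg_left ha (by positivity)) hb (norm_nonneg _)
    (by positivity)

lemma mnorm_diag_le {p : ℕ} {v : Fin p → ℂ} {C : ℝ} (hC : 0 ≤ C) (h : ∀ w, ‖v w‖ ≤ C) :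
    ‖(Matrix.diagonal v : Matrix (Fin p) (Fin p) ℂ)‖ ≤ C := by
  rw [Matrix.norm_le_iff hC]
  intro i j
  rcases eq_or_ne i j with rfl | hij
  · simpa using h i
  · simp [Matrix.diagonal_apply_ne _ hij, hC]

lemma norm_exp_neg_I_mul (r : ℝ) : ‖Complex.exp (-Complex.I * r)‖ = 1 := by
  simp [Complex.norm_exp]

lemma integral_nonneg_cplx {α : Type*} [MeasurableSpace α] {μ : Measure α} {g : α → ℂ}
    (h : ∀ a, 0 ≤ g a) : 0 ≤ ∫ a, g a ∂μ := by
  have h2 : ∫ a, g a ∂μ = ∫ a, ((g a).re : ℂ) ∂μ := by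
    refine integral_congr_ae (Filter.Eventually.of_forall fun a => ?_)
    obtain ⟨h1, h2⟩ := Complex.nonneg_iff.mp (h a)
    exact Complex.ext (by simp) (by simp [← h2])
  have h3 := @integral_ofReal _ _ μ ℂ _ (fun a => (g a).re)
  rw [h2]
  have h4 : ∫ a, ((g a).re : ℂ) ∂μ = ((∫ a, (g a).re ∂μ : ℝ) : ℂ) := h3
  rw [h4, Complex.nonneg_iff]
  exact ⟨by simpa using integral_nonneg fun a => (Complex.nonneg_iff.mp (h a)).1, by simp⟩

/-- conjTranspose as a continuous ℝ-linear map. -/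
noncomputable def ctCLM (p : ℕ) : Matrix (Fin p) (Fin p) ℂ →L[ℝ] Matrix (Fin p) (Fin p) ℂ :=
  LinearMap.toContinuousLinearMap
    { toFun := fun M => Mᴴ
      map_add' := fun A B => Matrix.conjTranspose_add A B
      map_smul' := fun r M => by
        simp [Matrix.conjTranspose_smul] }

/-- Quadratic form as a continuous ℂ-linear map. -/
noncomputable def quadCLM (p : ℕ) (v : Fin p → ℂ) : Matrix (Fin p) (Fin p) ℂ →L[ℂ] ℂ :=
  LinearMap.toContinuousLinearMap
    { toFun := fun M => star v ⬝ᵥ (M *ᵥ v)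
      map_add' := fun A B => by simp [Matrix.add_mulVec]
      map_smul' := fun r M => by simp [Matrix.smul_mulVec] }

/-- Multiplication on the left and right by fixed matrices, as a continuous ℂ-linear map. -/
noncomputable def mulLRCLM (p : ℕ) (A B : Matrix (Fin p) (Fin p) ℂ) :
    Matrix (Fin p) (Fin p) ℂ →L[ℂ] Matrix (Fin p) (Fin p) ℂ :=
  LinearMap.toContinuousLinearMap
    ((LinearMap.mulRight ℂ B).comp (LinearMap.mulLeft ℂ A))

lemma mulLR_integral {p : ℕ} {α : Type*} [MeasurableSpace α] {μ : Measure α}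
    {f : α → Matrix (Fin p) (Fin p) ℂ} (hf : Integrable f μ) (A B : Matrix (Fin p) (Fin p) ℂ) :
    A * (∫ a, f a ∂μ) * B = ∫ a, A * f a * B ∂μ := by
  have := ContinuousLinearMap.integral_comp_comm (mulLRCLM p A B) hf
  exact this.symm

lemma integrable_mulLR {p : ℕ} {α : Type*} [MeasurableSpace α] {μ : Measure α}
    {f : α → Matrix (Fin p) (Fin p) ℂ} (hf : Integrable f μ) (A B : Matrix (Fin p) (Fin p) ℂ) :
    Integrable (fun a => A * f a * B) μ := by
  have := (mulLRCLM p A B).integrable_comp hf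
  exact this

lemma integral_posSemidef {p : ℕ} {α : Type*} [MeasurableSpace α] {μ : Measure α}
    {f : α → Matrix (Fin p) (Fin p) ℂ} (hf : Integrable f μ) (h : ∀ a, (f a).PosSemidef) :
    (∫ a, f a ∂μ).PosSemidef := by
  rw [Matrix.posSemidef_iff_dotProduct_mulVec]
  constructor
  · show _ = _
    have hc := ContinuousLinearMap.integral_comp_comm (ctCLM p) hf
    have hc' : ∫ a, (f a)ᴴ ∂μ = (∫ a, f a ∂μ)ᴴ := by exact hc
    rw [← hc']
    refine integral_congr_ae (Filter.Eventually.of_forall fun a => ?_)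
    exact (h a).1
  · intro v
    have hq := ContinuousLinearMap.integral_comp_comm (quadCLM p v) hf
    have hq' : ∫ a, star v ⬝ᵥ (f a *ᵥ v) ∂μ = star v ⬝ᵥ ((∫ a, f a ∂μ) *ᵥ v) := by
      exact hq
    rw [← hq']
    exact integral_nonneg_cplx fun a => (Matrix.posSemidef_iff_dotProduct_mulVec.mp (h a)).2 v

/-- The matrix-valued "feature map" of the kernel. -/
noncomputable def auxT (p m : ℕ) (z : Fin p → Fin m → ℤ)
    (ψ : (Fin m → ℤ) → (Fin m → ℤ) → (Fin m → ℤ))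
    (a1 a2 a3 a4 : Matrix (Fin p) (Fin p) ℂ) (x : (Fin m → ℤ) → ℂ)
    (η : Fin 2 → ℝ) (ω : Fin m → ℝ) : Matrix (Fin p) (Fin p) ℂ :=
  a4 * ∑ u : Fin p, diagPhaseM p m z ψ x (z u) η * a3 * diagBM p m z ψ (z u) ω * a2 *
    diagAbsM p m z ψ x (z u) * a1

lemma diagAbsM_herm (p m : ℕ) (z : Fin p → Fin m → ℤ) (ψ) (x) (zpt) :
    (diagAbsM p m z ψ x zpt)ᴴ = diagAbsM p m z ψ x zpt := by
  unfold diagAbsM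
  rw [Matrix.diagonal_conjTranspose]
  have hv : (star fun w => ((‖x (ψ zpt (z w))‖ : ℝ) : ℂ))
      = fun w => ((‖x (ψ zpt (z w))‖ : ℝ) : ℂ) :=
    funext fun w => Complex.conj_ofReal _
  rw [hv]

lemma key_expand (p m : ℕ) (z : Fin p → Fin m → ℤ) (ψ) (a1 a2 a3 a4 : Matrix (Fin p) (Fin p) ℂ)
    (x y : (Fin m → ℤ) → ℂ) (η : Fin 2 → ℝ) (ω : Fin m → ℝ) :
    (∑ u : Fin p, ∑ u' : Fin p,
        a1ᴴ * diagAbsM p m z ψ x (z u) * a2ᴴ * (diagBM p m z ψ (z u) ω)ᴴ * a3ᴴ *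
          (diagPhaseM p m z ψ x (z u) η)ᴴ * a4ᴴ * a4 * diagPhaseM p m z ψ y (z u') η *
          a3 * diagBM p m z ψ (z u') ω * a2 * diagAbsM p m z ψ y (z u') * a1)
    = (auxT p m z ψ a1 a2 a3 a4 x η ω)ᴴ * auxT p m z ψ a1 a2 a3 a4 y η ω := by
  unfold auxT
  simp only [Matrix.conjTranspose_mul, Matrix.conjTranspose_sum, Matrix.sum_mul, Matrix.mul_sum,
    diagAbsM_herm, Matrix.mul_assoc]
  exact Finset.sum_comm

lemma norm_diagPhaseM_le (p m : ℕ) (z : Fin p → Fin m → ℤ) (ψ) (x) (zpt) (η) :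
    ‖diagPhaseM p m z ψ x zpt η‖ ≤ 1 :=
  mnorm_diag_le zero_le_one fun w => le_of_eq (norm_exp_neg_I_mul _)

lemma norm_diagBM_le (p m : ℕ) (z : Fin p → Fin m → ℤ) (ψ) (zpt) (ω) :
    ‖diagBM p m z ψ zpt ω‖ ≤ 1 :=
  mnorm_diag_le zero_le_one fun w => le_of_eq (norm_exp_neg_I_mul _)

lemma auxT_bound (p m : ℕ) (z : Fin p → Fin m → ℤ) (ψ)
    (a1 a2 a3 a4 : Matrix (Fin p) (Fin p) ℂ) (x : (Fin m → ℤ) → ℂ) :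
    ∃ C : ℝ, 0 ≤ C ∧ ∀ η ω, ‖auxT p m z ψ a1 a2 a3 a4 x η ω‖ ≤ C := by
  refine ⟨p * ‖a4‖ * ∑ u : Fin p,
    p * (p * (p * (p * (p * 1 * ‖a3‖) * 1) * ‖a2‖) * ‖diagAbsM p m z ψ x (z u)‖) * ‖a1‖,
    by positivity, fun η ω => ?_⟩
  unfold auxT
  refine mnorm_mul_le' le_rfl ?_
  refine (norm_sum_le _ _).trans (Finset.sum_le_sum fun u _ => ?_)
  exact mnorm_mul_le' (mnorm_mul_le' (mnorm_mul_le' (mnorm_mul_le'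
    (mnorm_mul_le' (norm_diagPhaseM_le p m z ψ x (z u) η) le_rfl)
    (norm_diagBM_le p m z ψ (z u) ω)) le_rfl) le_rfl) le_rfl

lemma auxT_continuous (p m : ℕ) (z : Fin p → Fin m → ℤ) (ψ)
    (a1 a2 a3 a4 : Matrix (Fin p) (Fin p) ℂ) (x : (Fin m → ℤ) → ℂ) :
    Continuous (fun q : (Fin 2 → ℝ) × (Fin m → ℝ) => auxT p m z ψ a1 a2 a3 a4 x q.1 q.2) := by
  unfold auxT
  refine Continuous.matrix_mul continuous_const (continuous_finset_sum _ fun u _ => ?_)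
  have hP : Continuous fun q : (Fin 2 → ℝ) × (Fin m → ℝ) => diagPhaseM p m z ψ x (z u) q.1 := by
    unfold diagPhaseM
    refine Continuous.matrix_diagonal (continuous_pi fun w => ?_)
    refine Complex.continuous_exp.comp (continuous_const.mul ?_)
    exact Complex.continuous_ofReal.comp (by fun_prop)
  have hB : Continuous fun q : (Fin 2 → ℝ) × (Fin m → ℝ) => diagBM p m z ψ (z u) q.2 := by
    unfold diagBM
    refine Continuous.matrix_diagonal (continuous_pi fun w => ?_)
    refine Complex.continuous_exp.comp (continuous_const.mul ?_)
    exact Complex.continuous_ofReal.comp (by fun_prop)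
  exact ((((hP.matrix_mul continuous_const).matrix_mul hB).matrix_mul
    continuous_const).matrix_mul continuous_const).matrix_mul continuous_const

end Aux

/-- **Proposition 13**: the generalized matrix-valued convolutional kernel is a
`ℂ^{p×p}`-valued positive definite kernel: all its Gram-type combinations over nonvanishing
inputs are positive semidefinite. Here `Ω = {z_1, …, z_p}` and `ψ` maps `Ω × Ω` into `Ω`. -/
theorem genConvKernel_pos_def (p m : ℕ) (z : Fin p → Fin m → ℤ)
    (ψ : (Fin m → ℤ) → (Fin m → ℤ) → (Fin m → ℤ))
    (hψ : ∀ u w : Fin p, ∃ v : Fin p, ψ (z u) (z w) = z v)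
    (β σ : ℝ) (hβ : 0 < β) (hσ : 0 < σ)
    (a1 a2 a3 a4 : Matrix (Fin p) (Fin p) ℂ)
    (n : ℕ) (xs : Fin n → (Fin m → ℤ) → ℂ) (hxs : ∀ i (u : Fin p), xs i (z u) ≠ 0)
    (c : Fin n → Matrix (Fin p) (Fin p) ℂ) :
    (∑ i : Fin n, ∑ j : Fin n,
      (c i)ᴴ * genConvKernel p m z ψ β σ a1 a2 a3 a4 (xs i) (xs j) * c j).PosSemidef := by
  classical
  haveI hμ : IsProbabilityMeasure (gaussPi 2 σ) := by unfold gaussPi; infer_instance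
  haveI hν : IsProbabilityMeasure (gaussPi m β) := by unfold gaussPi; infer_instance
  set ρ : Measure ((Fin 2 → ℝ) × (Fin m → ℝ)) := (gaussPi 2 σ).prod (gaussPi m β) with hρdef
  obtain ⟨C, hC0, hCb⟩ : ∃ C : Fin n → ℝ, (∀ i, 0 ≤ C i) ∧
      ∀ i η ω, ‖auxT p m z ψ a1 a2 a3 a4 (xs i) η ω‖ ≤ C i := by
    choose C h1 h2 using fun i => auxT_bound p m z ψ a1 a2 a3 a4 (xs i)
    exact ⟨C, h1, h2⟩
  have hTcont : ∀ i, Continuous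
      (fun q : (Fin 2 → ℝ) × (Fin m → ℝ) => auxT p m z ψ a1 a2 a3 a4 (xs i) q.1 q.2) :=
    fun i => auxT_continuous p m z ψ a1 a2 a3 a4 (xs i)
  have hgint : ∀ i j, Integrable (fun q : (Fin 2 → ℝ) × (Fin m → ℝ) =>
      (auxT p m z ψ a1 a2 a3 a4 (xs i) q.1 q.2)ᴴ * auxT p m z ψ a1 a2 a3 a4 (xs j) q.1 q.2) ρ := by
    intro i j
    have hcont : Continuous (fun q : (Fin 2 → ℝ) × (Fin m → ℝ) =>
        (auxT p m z ψ a1 a2 a3 a4 (xs i) q.1 q.2)ᴴ * auxT p m z ψ a1 a2 a3 a4 (xs j) q.1 q.2) :=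
      ((hTcont i).matrix_conjTranspose).matrix_mul (hTcont j)
    refine Integrable.mono' (integrable_const (p * C i * C j)) hcont.aestronglyMeasurable
      (Filter.Eventually.of_forall fun q => ?_)
    refine mnorm_mul_le' ?_ (hCb j q.1 q.2)
    rw [Matrix.norm_conjTranspose]
    exact hCb i q.1 q.2
  have hK : ∀ i j, genConvKernel p m z ψ β σ a1 a2 a3 a4 (xs i) (xs j)
      = ∫ q, (auxT p m z ψ a1 a2 a3 a4 (xs i) q.1 q.2)ᴴ *
          auxT p m z ψ a1 a2 a3 a4 (xs j) q.1 q.2 ∂ρ := by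
    intro i j
    unfold genConvKernel
    simp only [key_expand]
    exact integral_integral (hgint i j)
  simp only [hK]
  have h2 : ∀ i j, (c i)ᴴ * (∫ q, (auxT p m z ψ a1 a2 a3 a4 (xs i) q.1 q.2)ᴴ *
        auxT p m z ψ a1 a2 a3 a4 (xs j) q.1 q.2 ∂ρ) * c j
      = ∫ q, (c i)ᴴ * ((auxT p m z ψ a1 a2 a3 a4 (xs i) q.1 q.2)ᴴ *
          auxT p m z ψ a1 a2 a3 a4 (xs j) q.1 q.2) * c j ∂ρ :=
    fun i j => mulLR_integral (hgint i j) _ _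
  simp only [h2]
  have hFint : ∀ i j, Integrable (fun q => (c i)ᴴ * ((auxT p m z ψ a1 a2 a3 a4 (xs i) q.1 q.2)ᴴ *
      auxT p m z ψ a1 a2 a3 a4 (xs j) q.1 q.2) * c j) ρ :=
    fun i j => integrable_mulLR (hgint i j) _ _
  have hsum : ∑ i : Fin n, ∑ j : Fin n, ∫ q, (c i)ᴴ *
        ((auxT p m z ψ a1 a2 a3 a4 (xs i) q.1 q.2)ᴴ *
          auxT p m z ψ a1 a2 a3 a4 (xs j) q.1 q.2) * c j ∂ρ
      = ∫ q, ∑ i : Fin n, ∑ j : Fin n, (c i)ᴴ *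
          ((auxT p m z ψ a1 a2 a3 a4 (xs i) q.1 q.2)ᴴ *
            auxT p m z ψ a1 a2 a3 a4 (xs j) q.1 q.2) * c j ∂ρ := by
    rw [integral_finset_sum _ (fun i _ => integrable_finset_sum _ fun j _ => hFint i j)]
    exact Finset.sum_congr rfl fun i _ => (integral_finset_sum _ fun j _ => hFint i j).symm
  rw [hsum]
  have halg : ∀ q : (Fin 2 → ℝ) × (Fin m → ℝ),
      ∑ i : Fin n, ∑ j : Fin n, (c i)ᴴ * ((auxT p m z ψ a1 a2 a3 a4 (xs i) q.1 q.2)ᴴ *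
          auxT p m z ψ a1 a2 a3 a4 (xs j) q.1 q.2) * c j
      = (∑ i : Fin n, auxT p m z ψ a1 a2 a3 a4 (xs i) q.1 q.2 * c i)ᴴ *
          (∑ j : Fin n, auxT p m z ψ a1 a2 a3 a4 (xs j) q.1 q.2 * c j) := by
    intro q
    simp only [Matrix.conjTranspose_sum, Matrix.conjTranspose_mul, Matrix.sum_mul,
      Matrix.mul_sum, Matrix.mul_assoc]
    exact Finset.sum_comm
  have hfun : (fun q : (Fin 2 → ℝ) × (Fin m → ℝ) =>
      ∑ i : Fin n, ∑ j : Fin n, (c i)ᴴ * ((auxT p m z ψ a1 a2 a3 a4 (xs i) q.1 q.2)ᴴ *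
          auxT p m z ψ a1 a2 a3 a4 (xs j) q.1 q.2) * c j)
      = fun q => (∑ i : Fin n, auxT p m z ψ a1 a2 a3 a4 (xs i) q.1 q.2 * c i)ᴴ *
          (∑ j : Fin n, auxT p m z ψ a1 a2 a3 a4 (xs j) q.1 q.2 * c j) := funext halg
  rw [hfun]
  refine integral_posSemidef ?_ fun q => Matrix.posSemidef_conjTranspose_mul_self _
  refine (integrable_finset_sum Finset.univ fun i _ => integrable_finset_sum Finset.univ fun j _ => hFint i j).congr
    (Filter.Eventually.of_forall fun q => by exact halg q)
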